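/- Let A : [0,∞)^n → [0,∞) be an aggregation function such that A* is finite and strictly directionally convex. Then A_*(x) = ∇·x for all x ∈ [0,∞)^n, where ∇_i = lim_{t→0⁺} A(t·e_i)/t and e_i is the i-th standard unit vector. -/

import Mathlib

set_option maxHeartbeats 1000000
set_option synthInstance.maxHeartbeats 400000
open scoped NNReal
open Finset

namespace Sub18

lemma dyadic_step (q : ℝ≥0 → ℝ≥0)
    (hmid : ∀ u v : ℝ≥0, 2 * q ((u + v) / 2) ≤ q u + q v) (b : ℝ≥0) :
    ∀ m k : ℕ, k ≤ 2^m →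
      (2^m : ℝ≥0) * q ((k * b) / 2^m) + (k : ℝ≥0) * q 0 ≤
        (2^m : ℝ≥0) * q 0 + (k : ℝ≥0) * q b := by
  intro m
  induction m with
  | zero =>
    intro k hk
    interval_cases k
    · simp
    · simp only [Nat.cast_one, pow_zero, one_mul, mul_one, div_one]
      rw [add_comm]
  | succ m ih =>
    intro k hk
    have h2m : (2:ℝ≥0)^(m+1) = 2 * 2^m := by ring
    rcases Nat.even_or_odd k with ⟨k', rfl⟩ | ⟨k', rfl⟩
    · have hk' : k' ≤ 2^m := by
        have : 2^(m+1) = 2 * 2^m := by ring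
        omega
      have harg : (((k' + k' : ℕ) : ℝ≥0) * b) / 2^(m+1) = ((k' : ℝ≥0) * b)/2^m := by
        push_cast
        rw [h2m, ← two_mul, mul_assoc, mul_div_mul_left _ _ (two_ne_zero)]
      rw [harg]
      have := ih k' hk'
      calc (2:ℝ≥0)^(m+1) * q ((k' : ℝ≥0) * b / 2^m) + ((k'+k' : ℕ) : ℝ≥0) * q 0
          = 2 * ((2:ℝ≥0)^m * q ((k' : ℝ≥0) * b / 2^m) + (k' : ℝ≥0) * q 0) := by
            push_cast; ring
        _ ≤ 2 * ((2:ℝ≥0)^m * q 0 + (k' : ℝ≥0) * q b) := by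
            exact mul_le_mul_right this 2
        _ = (2:ℝ≥0)^(m+1) * q 0 + ((k'+k' : ℕ) : ℝ≥0) * q b := by
            push_cast; ring
    · -- k = 2k'+1
      have hk1 : k' + 1 ≤ 2^m := by
        have : 2^(m+1) = 2 * 2^m := by omega
        omega
      have hk0 : k' ≤ 2^m := le_trans (Nat.le_succ k') hk1
      -- midpoint identity
      have harg : (((2*k'+1 : ℕ) : ℝ≥0) * b) / 2^(m+1)
          = (((k' : ℝ≥0) * b / 2^m) + ((k' : ℝ≥0)+1) * b / 2^m) / 2 := by
        have hb : ((k':ℝ≥0) * b + ((k':ℝ≥0)+1) * b) = ((2*k'+1 : ℕ) : ℝ≥0) * b := by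
          push_cast; ring
        rw [← add_div, hb, div_div, h2m, mul_comm ((2:ℝ≥0)^m) 2]
      rw [harg]
      have hm := hmid ((k' : ℝ≥0) * b / 2^m) (((k' : ℝ≥0)+1) * b / 2^m)
      have h1 := ih k' hk0
      have h2 := ih (k'+1) hk1
      have key : (2:ℝ≥0)^(m+1) * q ((((k' : ℝ≥0) * b / 2^m) + ((k' : ℝ≥0)+1) * b / 2^m) / 2)
          ≤ 2^m * q ((k' : ℝ≥0) * b / 2^m) + 2^m * q (((k'+1:ℕ) : ℝ≥0) * b / 2^m) := by
        calc (2:ℝ≥0)^(m+1) * q ((((k' : ℝ≥0) * b / 2^m) + ((k' : ℝ≥0)+1) * b / 2^m) / 2)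
            = 2^m * (2 * q ((((k' : ℝ≥0) * b / 2^m) + ((k' : ℝ≥0)+1) * b / 2^m) / 2)) := by ring
          _ ≤ 2^m * (q ((k' : ℝ≥0) * b / 2^m) + q (((k' : ℝ≥0)+1) * b / 2^m)) :=
              mul_le_mul_right hm _
          _ = 2^m * q ((k' : ℝ≥0) * b / 2^m) + 2^m * q (((k'+1:ℕ) : ℝ≥0) * b / 2^m) := by
              push_cast; ring
      calc (2:ℝ≥0)^(m+1) * q ((((k' : ℝ≥0) * b / 2^m) + ((k' : ℝ≥0)+1) * b / 2^m) / 2)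
            + ((2*k'+1 : ℕ) : ℝ≥0) * q 0
          ≤ (2^m * q ((k' : ℝ≥0) * b / 2^m) + (k' : ℝ≥0) * q 0)
            + (2^m * q (((k'+1:ℕ) : ℝ≥0) * b / 2^m) + ((k'+1 : ℕ) : ℝ≥0) * q 0) := by
            push_cast
            calc _ ≤ (2^m * q ((k' : ℝ≥0) * b / 2^m) + 2^m * q (((k'+1:ℕ) : ℝ≥0) * b / 2^m))
                + (2*(k':ℝ≥0)+1) * q 0 := by exact add_le_add_left key _
              _ = _ := by push_cast; ring
        _ ≤ (2^m * q 0 + (k' : ℝ≥0) * q b) + (2^m * q 0 + ((k'+1 : ℕ) : ℝ≥0) * q b) :=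
            add_le_add h1 h2
        _ = (2:ℝ≥0)^(m+1) * q 0 + ((2*k'+1 : ℕ) : ℝ≥0) * q b := by push_cast; ring

lemma one_dim_convex (q : ℝ≥0 → ℝ≥0) (hq : Monotone q)
    (hmid : ∀ u v : ℝ≥0, 2 * q ((u + v) / 2) ≤ q u + q v) {b s : ℝ≥0} (hs : s ≤ b) :
    b * q s + s * q 0 ≤ b * q 0 + s * q b := by
  rcases eq_or_lt_of_le ((zero_le (a := b))) with hb | hb
  · have : s = 0 := le_antisymm (hb ▸ hs) ((zero_le (a := s)))
    subst this; simp [← hb]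
  rw [← NNReal.coe_le_coe]
  push_cast
  apply le_of_forall_pos_le_add
  intro ε hε
  have hQ0b : (q 0 : ℝ) ≤ q b := NNReal.coe_le_coe.mpr (hq ((zero_le (a := b))))
  have hbR : (0:ℝ) < b := hb
  obtain ⟨m, hm⟩ := pow_unbounded_of_one_lt ((b:ℝ) * ((q b : ℝ) - q 0) / ε) (one_lt_two)
  have hP : (0:ℝ) < 2^m := by positivity
  have hmε : (b:ℝ) * ((q b : ℝ) - q 0) < ε * 2^m := by
    rw [div_lt_iff₀ hε] at hm
    linarith [hm]
  set k : ℕ := ⌈(s:ℝ) * 2^m / b⌉₊ with hk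
  have harg_nonneg : (0:ℝ) ≤ (s:ℝ) * 2^m / b := by positivity
  have hk2m : k ≤ 2^m := by
    apply Nat.ceil_le.mpr
    rw [div_le_iff₀ hbR]
    push_cast
    nlinarith [NNReal.coe_le_coe.mpr hs]
  have hsk : (s:ℝ) ≤ (k:ℝ) * b / 2^m := by
    have : (s:ℝ) * 2^m / b ≤ k := Nat.le_ceil _
    rw [div_le_iff₀ hbR] at this
    rw [le_div_iff₀ hP]
    linarith
  have hk_le : (k:ℝ) ≤ (s:ℝ) * 2^m / b + 1 := by
    have := Nat.ceil_lt_add_one harg_nonneg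
    linarith
  set K : ℝ≥0 := ((k:ℝ≥0) * b) / 2^m with hK
  have hKR : (K:ℝ) = (k:ℝ) * b / 2^m := by push_cast [hK]; ring
  have hsK : s ≤ K := by
    rw [← NNReal.coe_le_coe, hKR]; exact hsk
  have hQsK : (q s : ℝ) ≤ q K := NNReal.coe_le_coe.mpr (hq hsK)
  have hdy := dyadic_step q hmid b m k hk2m
  have hdyR : (2:ℝ)^m * (q K : ℝ) + (k:ℝ) * q 0 ≤ (2:ℝ)^m * q 0 + (k:ℝ) * q b := by
    have := NNReal.coe_le_coe.mpr hdy
    push_cast at this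
    convert this using 3
  -- combine
  have hkP : (k:ℝ) * b / 2^m ≤ (s:ℝ) + b / 2^m := by
    have h1 : (k:ℝ) * b ≤ (s:ℝ) * 2^m + b := by
      have h2 : (k:ℝ) * b ≤ ((s:ℝ) * 2^m / b + 1) * b :=
        mul_le_mul_of_nonneg_right hk_le (le_of_lt hbR)
      have h3 : ((s:ℝ) * 2^m / b + 1) * b = (s:ℝ) * 2^m + b := by field_simp
      linarith
    have h2 : (s:ℝ) + b/2^m = ((s:ℝ)*2^m + b)/2^m := by field_simp
    rw [h2]
    gcongr
  have hQK : (q K : ℝ) ≤ (q 0 : ℝ) + (k:ℝ)/2^m * ((q b : ℝ) - q 0) := by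
    have h2 : (2:ℝ)^m * (q K : ℝ) ≤ (2:ℝ)^m * ((q 0 : ℝ) + (k:ℝ)/2^m * ((q b : ℝ) - q 0)) := by
      have : (2:ℝ)^m * ((q 0 : ℝ) + (k:ℝ)/2^m * ((q b : ℝ) - q 0))
          = (2:ℝ)^m * q 0 + (k:ℝ) * ((q b : ℝ) - q 0) := by field_simp
      rw [this]; linarith
    exact le_of_mul_le_mul_left h2 hP
  have hfinal : (b:ℝ) * q s ≤ (b:ℝ) * q 0 + (s:ℝ) * ((q b:ℝ) - q 0) + ε := by
    have c1 : (b:ℝ) * q s ≤ b * q K := by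
      apply mul_le_mul_of_nonneg_left hQsK (le_of_lt hbR)
    have c2 : (b:ℝ) * q K ≤ b * q 0 + (b * ((k:ℝ)/2^m)) * ((q b:ℝ) - q 0) := by
      nlinarith [hQK]
    have c3 : (b:ℝ) * ((k:ℝ)/2^m) ≤ (s:ℝ) + b/2^m := by
      calc (b:ℝ) * ((k:ℝ)/2^m) = (k:ℝ) * b / 2^m := by ring
        _ ≤ (s:ℝ) + b / 2^m := hkP
    have c4 : (b * ((k:ℝ)/2^m)) * ((q b:ℝ) - q 0) ≤ ((s:ℝ) + b/2^m) * ((q b:ℝ) - q 0) := by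
      apply mul_le_mul_of_nonneg_right c3 (by linarith)
    have c5 : (b:ℝ)/2^m * ((q b:ℝ) - q 0) ≤ ε := by
      rw [div_mul_eq_mul_div, div_le_iff₀ hP]
      linarith [hmε]
    nlinarith [c1, c2, c4, c5]
  linarith [hfinal]


section Main

variable {n : ℕ}

/-- the sup-set -/
def supSet (A : (Fin n → ℝ≥0) → ℝ≥0) (x : Fin n → ℝ≥0) : Set ℝ≥0 :=
  {s : ℝ≥0 | ∃ (k : ℕ) (c : Fin k → (Fin n → ℝ≥0)), 1 ≤ k ∧
    (∑ j, c j) ≤ x ∧ s = ∑ j, A (c j)}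

variable {A Astar : (Fin n → ℝ≥0) → ℝ≥0}

lemma self_mem_supSet (A : (Fin n → ℝ≥0) → ℝ≥0) (x : Fin n → ℝ≥0) :
    A x ∈ supSet A x := by
  refine ⟨1, fun _ => x, le_refl 1, ?_, ?_⟩ <;> simp

lemma le_star (hstar : ∀ x, IsLUB (supSet A x) (Astar x)) (x : Fin n → ℝ≥0) :
    A x ≤ Astar x :=
  (hstar x).1 (self_mem_supSet A x)

lemma star_zero (hA0 : A 0 = 0) (hstar : ∀ x, IsLUB (supSet A x) (Astar x)) :
    Astar 0 = 0 := by
  have hub : (0:ℝ≥0) ∈ upperBounds (supSet A 0) := by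
    rintro s ⟨k, c, hk, hsum, rfl⟩
    have hc : ∀ j, c j = 0 := by
      intro j
      have h0 : (∑ j, c j) = 0 := le_antisymm hsum (zero_le)
      exact (Finset.sum_eq_zero_iff.mp h0) j (Finset.mem_univ j)
    simp [hc, hA0]
  exact le_antisymm ((hstar 0).2 hub) (zero_le)

lemma star_mono (hstar : ∀ x, IsLUB (supSet A x) (Astar x)) : Monotone Astar := by
  intro x y hxy
  apply (hstar x).mono (hstar y)
  rintro s ⟨k, c, hk, hsum, rfl⟩
  exact ⟨k, c, hk, le_trans hsum hxy, rfl⟩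

lemma star_superadd (hstar : ∀ x, IsLUB (supSet A x) (Astar x)) (u v : Fin n → ℝ≥0) :
    Astar u + Astar v ≤ Astar (u + v) := by
  have key : ∀ s ∈ supSet A u, ∀ t ∈ supSet A v, s + t ≤ Astar (u + v) := by
    rintro s ⟨k, c, hk, hsum, rfl⟩ t ⟨k', c', hk', hsum', rfl⟩
    apply (hstar (u+v)).1
    have e1 : ∀ i : Fin k, Fin.append c c' (Fin.castAdd k' i) = c i := Fin.append_left c c'
    have e2 : ∀ i : Fin k', Fin.append c c' (Fin.natAdd k i) = c' i := Fin.append_right c c'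
    refine ⟨k + k', Fin.append c c', by omega, ?_, ?_⟩
    · rw [Fin.sum_univ_add]
      simp only [e1, e2]
      exact add_le_add hsum hsum'
    · rw [Fin.sum_univ_add]
      simp only [e1, e2]
  have h2 : ∀ s ∈ supSet A u, s + Astar v ≤ Astar (u + v) := by
    intro s hs
    have hsle : s ≤ Astar (u+v) :=
      le_trans ((hstar u).1 hs) (star_mono hstar le_self_add)
    have hv : Astar v ≤ Astar (u+v) - s :=
      (hstar v).2 (fun t ht => le_tsub_of_add_le_left (key s hs t ht))
    calc s + Astar v ≤ s + (Astar (u+v) - s) := add_le_add_right hv s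
      _ = Astar (u+v) := add_tsub_cancel_of_le hsle
  have hu : Astar u ≤ Astar (u+v) - Astar v :=
    (hstar u).2 (fun s hs => le_tsub_of_add_le_right (h2 s hs))
  calc Astar u + Astar v ≤ (Astar (u+v) - Astar v) + Astar v := add_le_add_left hu _
    _ = Astar (u+v) := tsub_add_cancel_of_le (star_mono hstar le_add_self)

lemma star_strict (hA0 : A 0 = 0) (hstar : ∀ x, IsLUB (supSet A x) (Astar x))
    (hconv : ∀ u v x y : Fin n → ℝ≥0, u < x → u < y → x < v → y < v → u + v = x + y →
      Astar x + Astar y < Astar u + Astar v)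
    {u v : Fin n → ℝ≥0} (hu : u ≠ 0) (hv : v ≠ 0) :
    Astar u + Astar v < Astar (u + v) := by
  have h := hconv 0 (u + v) u v (pos_iff_ne_zero.mpr hu) (pos_iff_ne_zero.mpr hv)
    (lt_add_of_pos_right u (pos_iff_ne_zero.mpr hv))
    (lt_add_of_pos_left v (pos_iff_ne_zero.mpr hu))
    (by rw [zero_add])
  rwa [star_zero hA0 hstar, zero_add] at h

lemma smul_dir_mono {d : Fin n → ℝ≥0} {a b : ℝ≥0} (h : a ≤ b) : a • d ≤ b • d := by
  intro i
  simp only [Pi.smul_apply, smul_eq_mul]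
  exact mul_le_mul_of_nonneg_right h (zero_le)

lemma ptlt {d : Fin n → ℝ≥0} (hd : d ≠ 0) {a b : ℝ≥0} (h : a < b) (z : Fin n → ℝ≥0) :
    z + a • d < z + b • d := by
  constructor
  · exact add_le_add_right (smul_dir_mono h.le) z
  · intro hle
    have heq : z + b • d ≤ z + a • d := hle
    obtain ⟨i, hi⟩ : ∃ i, d i ≠ 0 := by
      by_contra hc
      push_neg at hc
      exact hd (funext hc)
    have h1 : z i + b * d i ≤ z i + a * d i := heq i
    have h2 : b * d i ≤ a * d i := le_of_add_le_add_left h1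
    have h3 : b ≤ a := le_of_mul_le_mul_right h2 (pos_iff_ne_zero.mpr hi)
    exact absurd h (not_lt.mpr h3)

lemma mid_lt_left {u v : ℝ≥0} (h : u < v) : u < (u + v) / 2 := by
  have hm : (u + v) / 2 + (u + v) / 2 = u + v := add_halves _
  by_contra hc
  push_neg at hc
  have : (u + v)/2 + (u+v)/2 ≤ u + u := add_le_add hc hc
  rw [hm] at this
  exact absurd (le_of_add_le_add_left this) (not_le.mpr h)

lemma mid_lt_right {u v : ℝ≥0} (h : u < v) : (u + v) / 2 < v := by
  have hm : (u + v) / 2 + (u + v) / 2 = u + v := add_halves _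
  by_contra hc
  push_neg at hc
  have : v + v ≤ (u + v)/2 + (u+v)/2 := add_le_add hc hc
  rw [hm] at this
  exact absurd (le_of_add_le_add_right this) (not_le.mpr h)

lemma star_ray_mid (hstar : ∀ x, IsLUB (supSet A x) (Astar x))
    (hconv : ∀ u v x y : Fin n → ℝ≥0, u < x → u < y → x < v → y < v → u + v = x + y →
      Astar x + Astar y < Astar u + Astar v)
    (z d : Fin n → ℝ≥0) (u v : ℝ≥0) :
    2 * Astar (z + ((u + v)/2) • d) ≤ Astar (z + u • d) + Astar (z + v • d) := by
  rcases eq_or_ne d 0 with rfl | hd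
  · simp only [smul_zero, add_zero, two_mul]
    exact le_refl _
  rcases eq_or_ne u v with rfl | huv
  · have h2 : (u + u) / 2 = u := by
      rw [← two_mul, mul_div_cancel_left₀ _ (two_ne_zero (α := ℝ≥0))]
    rw [h2, two_mul]
  have key : ∀ a b : ℝ≥0, a < b →
      2 * Astar (z + ((a + b)/2) • d) ≤ Astar (z + a • d) + Astar (z + b • d) := by
    intro a b hab
    set m := (a + b)/2 with hmdef
    have hm : m + m = a + b := add_halves _
    have h1 : z + a • d < z + m • d := ptlt hd (mid_lt_left hab) z
    have h2 : z + m • d < z + b • d := ptlt hd (mid_lt_right hab) z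
    have heq : (z + a • d) + (z + b • d) = (z + m • d) + (z + m • d) := by
      rw [add_add_add_comm, add_add_add_comm z (m • d), ← add_smul, ← add_smul, hm]
    have := hconv (z + a • d) (z + b • d) (z + m • d) (z + m • d) h1 h1 h2 h2 heq
    rw [← two_mul] at this
    exact this.le
  rcases huv.lt_or_gt with h | h
  · exact key u v h
  · rw [add_comm u v, add_comm (Astar (z + u • d))]
    exact key v u h

lemma conv1 (hstar : ∀ x, IsLUB (supSet A x) (Astar x))
    (hconv : ∀ u v x y : Fin n → ℝ≥0, u < x → u < y → x < v → y < v → u + v = x + y →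
      Astar x + Astar y < Astar u + Astar v)
    (z d : Fin n → ℝ≥0) {b s : ℝ≥0} (hs : s ≤ b) :
    b * Astar (z + s • d) + s * Astar z ≤ b * Astar z + s * Astar (z + b • d) := by
  have hq : Monotone (fun t : ℝ≥0 => Astar (z + t • d)) := by
    intro a b hab
    exact star_mono hstar (add_le_add_right (smul_dir_mono hab) z)
  have hmid : ∀ u v : ℝ≥0, 2 * (fun t : ℝ≥0 => Astar (z + t • d)) ((u + v)/2) ≤
      (fun t : ℝ≥0 => Astar (z + t • d)) u + (fun t : ℝ≥0 => Astar (z + t • d)) v :=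
    fun u v => star_ray_mid hstar hconv z d u v
  have := one_dim_convex _ hq hmid hs
  simpa using this

lemma single_smul_one (i : Fin n) (t : ℝ≥0) : t • (Pi.single i 1 : Fin n → ℝ≥0) = Pi.single i t := by
  funext l
  simp only [Pi.smul_apply, smul_eq_mul, Pi.single_apply]
  by_cases h : l = i <;> simp [h]

/-- the candidate gradient -/
noncomputable def grd (Astar : (Fin n → ℝ≥0) → ℝ≥0) (i : Fin n) : ℝ≥0 :=
  sInf ((fun t => Astar (Pi.single i t) / t) '' Set.Ioi 0)

lemma slope_mono (hA0 : A 0 = 0) (hstar : ∀ x, IsLUB (supSet A x) (Astar x))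
    (hconv : ∀ u v x y : Fin n → ℝ≥0, u < x → u < y → x < v → y < v → u + v = x + y →
      Astar x + Astar y < Astar u + Astar v)
    (i : Fin n) {s t : ℝ≥0} (hs : 0 < s) (hst : s ≤ t) :
    Astar (Pi.single i s) / s ≤ Astar (Pi.single i t) / t := by
  have h := conv1 hstar hconv 0 (Pi.single i 1) hst
  rw [star_zero hA0 hstar] at h
  simp only [zero_add, mul_zero, add_zero, single_smul_one] at h
  have ht : 0 < t := lt_of_lt_of_le hs hst
  rw [div_le_div_iff₀ hs ht]
  calc Astar (Pi.single i s) * t = t * Astar (Pi.single i s) := mul_comm _ _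
    _ ≤ s * Astar (Pi.single i t) := h
    _ = Astar (Pi.single i t) * s := mul_comm _ _

lemma grd_le (i : Fin n) {t : ℝ≥0} (ht : 0 < t) :
    grd Astar i ≤ Astar (Pi.single i t) / t :=
  csInf_le (OrderBot.bddBelow _) ⟨t, ht, rfl⟩

lemma grd_mul_le (i : Fin n) (t : ℝ≥0) :
    grd Astar i * t ≤ Astar (Pi.single i t) := by
  rcases eq_or_lt_of_le ((zero_le (a := t))) with h | ht
  · simp [← h]
  calc grd Astar i * t ≤ (Astar (Pi.single i t) / t) * t :=
        mul_le_mul_of_nonneg_right (grd_le i ht) (zero_le)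
    _ = Astar (Pi.single i t) := div_mul_cancel₀ _ (ne_of_gt ht)

lemma exists_slope_lt (i : Fin n) {η : ℝ≥0} (h : grd Astar i < η) :
    ∃ T : ℝ≥0, 0 < T ∧ Astar (Pi.single i T) / T < η := by
  obtain ⟨q, ⟨T, hT, rfl⟩, hq⟩ := exists_lt_of_csInf_lt
    (Set.Nonempty.image _ ⟨1, zero_lt_one⟩) h
  exact ⟨T, hT, hq⟩

lemma single_ne_zero' (i : Fin n) {t : ℝ≥0} (ht : t ≠ 0) : Pi.single i t ≠ (0 : Fin n → ℝ≥0) := by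
  intro h
  have := congrFun h i
  simp [Pi.single_eq_same] at this
  exact ht this

lemma grd_mul_lt (hA0 : A 0 = 0) (hstar : ∀ x, IsLUB (supSet A x) (Astar x))
    (hconv : ∀ u v x y : Fin n → ℝ≥0, u < x → u < y → x < v → y < v → u + v = x + y →
      Astar x + Astar y < Astar u + Astar v)
    (i : Fin n) {t : ℝ≥0} (ht : t ≠ 0) :
    grd Astar i * t < Astar (Pi.single i t) := by
  have ht2 : t / 2 ≠ 0 := by
    simp only [ne_eq, div_eq_zero_iff]
    push_neg
    exact ⟨ht, two_ne_zero⟩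
  have hsingle : (Pi.single i (t/2) : Fin n → ℝ≥0) + Pi.single i (t/2) = Pi.single i t := by
    funext l
    simp only [Pi.add_apply, Pi.single_apply]
    by_cases h : l = i <;> simp [h, add_halves]
  calc grd Astar i * t = grd Astar i * (t/2) + grd Astar i * (t/2) := by
        rw [← mul_add, add_halves]
    _ ≤ Astar (Pi.single i (t/2)) + Astar (Pi.single i (t/2)) :=
        add_le_add (grd_mul_le i _) (grd_mul_le i _)
    _ < Astar (Pi.single i (t/2) + Pi.single i (t/2)) :=
        star_strict hA0 hstar hconv (single_ne_zero' i ht2) (single_ne_zero' i ht2)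
    _ = Astar (Pi.single i t) := by rw [hsingle]

lemma star_superadd_finset (hA0 : A 0 = 0) (hstar : ∀ x, IsLUB (supSet A x) (Astar x))
    (h : Fin n → (Fin n → ℝ≥0)) (s : Finset (Fin n)) :
    (∑ i ∈ s, Astar (h i)) ≤ Astar (∑ i ∈ s, h i) := by
  induction s using Finset.induction with
  | empty => simp [star_zero hA0 hstar]
  | insert _ _ hx ih =>
    rename_i a s'
    rw [Finset.sum_insert hx, Finset.sum_insert hx]
    calc Astar (h a) + ∑ i ∈ s', Astar (h i) ≤ Astar (h a) + Astar (∑ i ∈ s', h i) :=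
          add_le_add_right ih _
      _ ≤ Astar (h a + ∑ i ∈ s', h i) := star_superadd hstar _ _

lemma linear_lt_star (hA0 : A 0 = 0) (hstar : ∀ x, IsLUB (supSet A x) (Astar x))
    (hconv : ∀ u v x y : Fin n → ℝ≥0, u < x → u < y → x < v → y < v → u + v = x + y →
      Astar x + Astar y < Astar u + Astar v)
    {y : Fin n → ℝ≥0} (hy : y ≠ 0) :
    (∑ i, grd Astar i * y i) < Astar y := by
  obtain ⟨i0, hi0⟩ : ∃ i, y i ≠ 0 := by
    by_contra hc
    push_neg at hc
    exact hy (funext hc)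
  have hsplit : (∑ i, grd Astar i * y i) =
      grd Astar i0 * y i0 + ∑ i ∈ Finset.univ.erase i0, grd Astar i * y i :=
    (Finset.add_sum_erase _ _ (Finset.mem_univ i0)).symm
  have hsplit2 : (Pi.single i0 (y i0) + ∑ i ∈ Finset.univ.erase i0, Pi.single i (y i)) = y := by
    rw [Finset.add_sum_erase Finset.univ (fun i => (Pi.single i (y i) : Fin n → ℝ≥0))
      (Finset.mem_univ i0)]
    exact Finset.univ_sum_single y
  rw [hsplit]
  calc grd Astar i0 * y i0 + ∑ i ∈ Finset.univ.erase i0, grd Astar i * y i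
      < Astar (Pi.single i0 (y i0)) + ∑ i ∈ Finset.univ.erase i0, grd Astar i * y i :=
        add_lt_add_left (grd_mul_lt hA0 hstar hconv i0 hi0) _
    _ ≤ Astar (Pi.single i0 (y i0)) + ∑ i ∈ Finset.univ.erase i0, Astar (Pi.single i (y i)) := by
        apply add_le_add_right
        apply Finset.sum_le_sum
        intro i _
        exact grd_mul_le i (y i)
    _ ≤ Astar (Pi.single i0 (y i0)) + Astar (∑ i ∈ Finset.univ.erase i0, Pi.single i (y i)) :=
        add_le_add_right (star_superadd_finset hA0 hstar _ _) _
    _ ≤ Astar (Pi.single i0 (y i0) + ∑ i ∈ Finset.univ.erase i0, Pi.single i (y i)) :=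
        star_superadd hstar _ _
    _ = Astar y := by rw [hsplit2]

lemma conv1' (hstar : ∀ x, IsLUB (supSet A x) (Astar x))
    (hconv : ∀ u v x y : Fin n → ℝ≥0, u < x → u < y → x < v → y < v → u + v = x + y →
      Astar x + Astar y < Astar u + Astar v)
    (z d : Fin n → ℝ≥0) {b s : ℝ≥0} (hs : s ≤ b) :
    b * Astar (z + s • d) ≤ (b - s) * Astar z + s * Astar (z + b • d) := by
  have h := conv1 hstar hconv z d hs
  have he : (b - s) * Astar z + s * Astar (z + b • d) + s * Astar z
      = b * Astar z + s * Astar (z + b • d) := by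
    rw [add_right_comm, ← add_mul, tsub_add_cancel_of_le hs]
  exact le_of_add_le_add_right (he ▸ h)

lemma sum_le_part_add_star (hA0 : A 0 = 0)
    (hstar : ∀ x, IsLUB (supSet A x) (Astar x))
    {y : Fin n → ℝ≥0} {k : ℕ} {c : Fin k → (Fin n → ℝ≥0)} (hk : 1 ≤ k)
    (hsum : (∑ j, c j) ≤ y) (j0 : Fin k) :
    (∑ j, A (c j)) ≤ A (c j0) + Astar (y - c j0) := by
  have hsplitc : (c j0) + ∑ j ∈ Finset.univ.erase j0, c j = ∑ j, c j :=
    Finset.add_sum_erase _ _ (Finset.mem_univ j0)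
  have hrest : (∑ j ∈ Finset.univ.erase j0, A (c j)) ≤ Astar (y - c j0) := by
    apply (hstar (y - c j0)).1
    refine ⟨k, Function.update c j0 0, hk, ?_, ?_⟩
    · have hupd : (∑ j, Function.update c j0 0 j) = ∑ j ∈ Finset.univ.erase j0, c j := by
        rw [Finset.sum_update_of_mem (Finset.mem_univ j0), zero_add, ← Finset.erase_eq]
      rw [hupd]
      apply le_tsub_of_add_le_right
      calc (∑ j ∈ Finset.univ.erase j0, c j) + c j0 = ∑ j, c j := by
            rw [add_comm]; exact hsplitc
        _ ≤ y := hsum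
    · rw [← Finset.add_sum_erase _ (fun j => A (Function.update c j0 0 j)) (Finset.mem_univ j0)]
      rw [Function.update_self, hA0, zero_add]
      apply Finset.sum_congr rfl
      intro j hj
      rw [Function.update_of_ne (Finset.ne_of_mem_erase hj)]
  calc (∑ j, A (c j)) = A (c j0) + ∑ j ∈ Finset.univ.erase j0, A (c j) :=
        (Finset.add_sum_erase _ _ (Finset.mem_univ j0)).symm
    _ ≤ A (c j0) + Astar (y - c j0) := add_le_add_right hrest _

def vtx (lo hi : Fin n → ℝ≥0) (S : Finset (Fin n)) : Fin n → ℝ≥0 :=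
  fun l => if l ∈ S then hi l else lo l

noncomputable def vsup (Astar : (Fin n → ℝ≥0) → ℝ≥0) (y lo hi : Fin n → ℝ≥0) : ℝ≥0 :=
  Finset.univ.sup (fun S : Finset (Fin n) => Astar (vtx lo hi S) + Astar (y - vtx lo hi S))

lemma box_bound (hstar : ∀ x, IsLUB (supSet A x) (Astar x))
    (hconv : ∀ u v x y : Fin n → ℝ≥0, u < x → u < y → x < v → y < v → u + v = x + y →
      Astar x + Astar y < Astar u + Astar v)
    {y lo hi : Fin n → ℝ≥0} (hlohi : lo ≤ hi) (hhiy : hi ≤ y) :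
    ∀ (s : Finset (Fin n)) (c : Fin n → ℝ≥0), lo ≤ c → c ≤ hi →
      (∀ l, l ∉ s → c l = lo l ∨ c l = hi l) →
      Astar c + Astar (y - c) ≤ vsup Astar y lo hi := by
  intro s
  induction s using Finset.induction with
  | empty =>
    intro c hlc hch hsnap
    classical
    have hc : c = vtx lo hi (Finset.univ.filter (fun l => c l = hi l)) := by
      funext l
      simp only [vtx, Finset.mem_filter, Finset.mem_univ, true_and]
      by_cases h : c l = hi l
      · rw [if_pos h]; exact h
      · rw [if_neg h]
        rcases hsnap l (Finset.notMem_empty l) with h' | h'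
        · exact h'
        · exact absurd h' h
    rw [hc]
    exact Finset.le_sup (f := fun S : Finset (Fin n) =>
      Astar (vtx lo hi S) + Astar (y - vtx lo hi S)) (Finset.mem_univ _)
  | insert _ _ ha ih =>
    rename_i a s'
    intro c hlc hch hsnap
    rcases eq_or_lt_of_le (hlohi a) with hba | hba
    · apply ih c hlc hch
      intro l hl
      by_cases h : l = a
      · rw [h]
        exact Or.inl (le_antisymm (hba ▸ hch a) (hlc a))
      · exact hsnap l (by simp [h, hl])
    · set clo := Function.update c a (lo a) with hclo
      set chi := Function.update c a (hi a) with hchi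
      set b := hi a - lo a with hbdef
      set sv := c a - lo a with hsv
      have hsvb : sv ≤ b := tsub_le_tsub_right (hch a) _
      have hbpos : 0 < b := tsub_pos_of_lt hba
      have idc : clo + sv • (Pi.single a 1 : Fin n → ℝ≥0) = c := by
        rw [single_smul_one]
        funext l
        simp only [hclo, hchi, Pi.add_apply]
        by_cases h : l = a
        · rw [h]
          rw [Function.update_self, Pi.single_eq_same]
          exact add_tsub_cancel_of_le (hlc a)
        · rw [Function.update_of_ne h, Pi.single_eq_of_ne h, add_zero]
      have idhi : clo + b • (Pi.single a 1 : Fin n → ℝ≥0) = chi := by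
        rw [single_smul_one]
        funext l
        simp only [hclo, hchi, Pi.add_apply]
        by_cases h : l = a
        · rw [h]
          rw [Function.update_self, Pi.single_eq_same, Function.update_self]
          exact add_tsub_cancel_of_le hba.le
        · rw [Function.update_of_ne h, Pi.single_eq_of_ne h, add_zero,
            Function.update_of_ne h]
      have hbsv : b - sv = hi a - c a := tsub_tsub_tsub_cancel_right (hlc a)
      have idw : (y - chi) + (b - sv) • (Pi.single a 1 : Fin n → ℝ≥0) = y - c := by
        rw [single_smul_one, hbsv]
        funext l
        simp only [hclo, hchi, Pi.add_apply, Pi.sub_apply]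
        by_cases h : l = a
        · rw [h]
          rw [Function.update_self, Pi.single_eq_same]
          exact tsub_add_tsub_cancel (hhiy a) (hch a)
        · rw [Function.update_of_ne h, Pi.single_eq_of_ne h, add_zero]
      have idw2 : (y - chi) + b • (Pi.single a 1 : Fin n → ℝ≥0) = y - clo := by
        rw [single_smul_one]
        funext l
        simp only [hclo, hchi, Pi.add_apply, Pi.sub_apply]
        by_cases h : l = a
        · rw [h]
          rw [Function.update_self, Pi.single_eq_same, Function.update_self]
          exact tsub_add_tsub_cancel (hhiy a) hba.le
        · rw [Function.update_of_ne h, Pi.single_eq_of_ne h, add_zero,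
            Function.update_of_ne h]
      have piece1 : b * Astar c ≤ (b - sv) * Astar clo + sv * Astar chi := by
        have h := conv1' hstar hconv clo (Pi.single a 1) hsvb
        rwa [idc, idhi] at h
      have piece2 : b * Astar (y - c) ≤ sv * Astar (y - chi) + (b - sv) * Astar (y - clo) := by
        have h := conv1' hstar hconv (y - chi) (Pi.single a 1) (tsub_le_self (a := b) (b := sv))
        rw [idw, idw2, tsub_tsub_cancel_of_le hsvb] at h
        exact h
      have hclo_lo : lo ≤ clo := by
        intro l
        simp only [hclo]
        by_cases h : l = a
        · rw [h]; rw [Function.update_self]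
        · rw [Function.update_of_ne h]; exact hlc l
      have hclo_hi : clo ≤ hi := by
        intro l
        simp only [hclo]
        by_cases h : l = a
        · rw [h]; rw [Function.update_self]; exact hlohi a
        · rw [Function.update_of_ne h]; exact hch l
      have hchi_lo : lo ≤ chi := by
        intro l
        simp only [hchi]
        by_cases h : l = a
        · rw [h]; rw [Function.update_self]; exact hlohi a
        · rw [Function.update_of_ne h]; exact hlc l
      have hchi_hi : chi ≤ hi := by
        intro l
        simp only [hchi]
        by_cases h : l = a
        · rw [h]; rw [Function.update_self]
        · rw [Function.update_of_ne h]; exact hch l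
      have hsnaplo : ∀ l, l ∉ s' → clo l = lo l ∨ clo l = hi l := by
        intro l hl
        simp only [hclo]
        by_cases h : l = a
        · rw [h]; rw [Function.update_self]; exact Or.inl rfl
        · rw [Function.update_of_ne h]
          exact hsnap l (by simp [h, hl])
      have hsnaphi : ∀ l, l ∉ s' → chi l = lo l ∨ chi l = hi l := by
        intro l hl
        simp only [hchi]
        by_cases h : l = a
        · rw [h]; rw [Function.update_self]; exact Or.inr rfl
        · rw [Function.update_of_ne h]
          exact hsnap l (by simp [h, hl])
      have ihlo := ih clo hclo_lo hclo_hi hsnaplo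
      have ihhi := ih chi hchi_lo hchi_hi hsnaphi
      have hcomb : b * (Astar c + Astar (y - c)) ≤
          (b - sv) * (Astar clo + Astar (y - clo)) + sv * (Astar chi + Astar (y - chi)) := by
        have e1 : b * (Astar c + Astar (y - c)) = b * Astar c + b * Astar (y - c) :=
          mul_add _ _ _
        have e2 : (b - sv) * (Astar clo + Astar (y - clo)) + sv * (Astar chi + Astar (y - chi))
            = ((b - sv) * Astar clo + sv * Astar chi)
              + (sv * Astar (y - chi) + (b - sv) * Astar (y - clo)) := by ring
        rw [e1, e2]
        exact add_le_add piece1 piece2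
      have hfin : b * (Astar c + Astar (y - c)) ≤ b * vsup Astar y lo hi := by
        calc b * (Astar c + Astar (y - c))
            ≤ (b - sv) * (Astar clo + Astar (y - clo)) + sv * (Astar chi + Astar (y - chi)) :=
              hcomb
          _ ≤ (b - sv) * vsup Astar y lo hi + sv * vsup Astar y lo hi :=
              add_le_add (mul_le_mul_right ihlo _) (mul_le_mul_right ihhi _)
          _ = b * vsup Astar y lo hi := by rw [← add_mul, tsub_add_cancel_of_le hsvb]
      exact le_of_mul_le_mul_left hfin hbpos

lemma vsup_lt (hA0 : A 0 = 0) (hstar : ∀ x, IsLUB (supSet A x) (Astar x))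
    (hconv : ∀ u v x y : Fin n → ℝ≥0, u < x → u < y → x < v → y < v → u + v = x + y →
      Astar x + Astar y < Astar u + Astar v)
    {y lo hi : Fin n → ℝ≥0} (hhiy : hi ≤ y) (hloh : lo ≤ hi) (hD : 0 < Astar y)
    (hne : ∀ S : Finset (Fin n), vtx lo hi S ≠ 0)
    (hne2 : ∀ S : Finset (Fin n), y - vtx lo hi S ≠ 0) :
    vsup Astar y lo hi < Astar y := by
  rw [vsup, Finset.sup_lt_iff hD]
  intro S _
  have hvy : vtx lo hi S ≤ y := by
    intro l
    by_cases h : l ∈ S <;> simp only [vtx, h, if_true, if_false]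
    · exact hhiy l
    · exact le_trans (hloh l) (hhiy l)
  calc Astar (vtx lo hi S) + Astar (y - vtx lo hi S)
      < Astar (vtx lo hi S + (y - vtx lo hi S)) := star_strict hA0 hstar hconv (hne S) (hne2 S)
    _ = Astar y := by rw [add_tsub_cancel_of_le hvy]

def allOne : Fin n → ℝ≥0 := fun _ => 1

def beta (δ : ℝ≥0) (a : Fin n) : Fin n → ℝ≥0 := fun l => if l = a then 0 else δ

noncomputable def Phi (Astar : (Fin n → ℝ≥0) → ℝ≥0) (δ : ℝ≥0) (a : Fin n) : ℝ≥0 :=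
  (Astar (δ • allOne) - Astar (beta δ a)) / δ

lemma beta_add_single (δ : ℝ≥0) (a : Fin n) :
    beta δ a + Pi.single a δ = δ • allOne := by
  funext l
  simp only [beta, allOne, Pi.add_apply, Pi.smul_apply, Pi.single_apply, smul_eq_mul, mul_one]
  by_cases h : l = a <;> simp [h]

lemma beta_le_diag (δ : ℝ≥0) (a : Fin n) : beta δ a ≤ δ • allOne := by
  intro l
  simp only [beta, allOne, Pi.smul_apply, smul_eq_mul, mul_one]
  by_cases h : l = a <;> simp [h]

lemma increment_le (hA0 : A 0 = 0) (hstar : ∀ x, IsLUB (supSet A x) (Astar x))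
    (hconv : ∀ u v x y : Fin n → ℝ≥0, u < x → u < y → x < v → y < v → u + v = x + y →
      Astar x + Astar y < Astar u + Astar v)
    {δ : ℝ≥0} (hδ : 0 < δ) (a : Fin n) {t : ℝ≥0} (ht : t ≤ δ) :
    Astar (beta δ a + Pi.single a t) ≤ Astar (beta δ a) + t * Phi Astar δ a := by
  have h := conv1' hstar hconv (beta δ a) (Pi.single a 1) ht
  rw [single_smul_one, single_smul_one, beta_add_single] at h
  have hmono' : Astar (beta δ a) ≤ Astar (δ • allOne) := star_mono hstar (beta_le_diag δ a)
  -- δ * Phi = Astar (δ•allOne) - Astar (beta δ a)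
  have hPhi : δ * Phi Astar δ a = Astar (δ • allOne) - Astar (beta δ a) := by
    rw [Phi, mul_comm, div_mul_cancel₀ _ (ne_of_gt hδ)]
  -- goal * δ
  have hgoal : δ * Astar (beta δ a + Pi.single a t)
      ≤ δ * (Astar (beta δ a) + t * Phi Astar δ a) := by
    calc δ * Astar (beta δ a + Pi.single a t)
        ≤ (δ - t) * Astar (beta δ a) + t * Astar (δ • allOne) := h
      _ = δ * (Astar (beta δ a) + t * Phi Astar δ a) := by
          rw [mul_add, ← mul_assoc, mul_comm δ t, mul_assoc, hPhi, tsub_mul, mul_tsub]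
          rw [tsub_add_eq_add_tsub (mul_le_mul_of_nonneg_right ht (zero_le)),
            add_tsub_assoc_of_le (mul_le_mul_right hmono' t)]
  exact le_of_mul_le_mul_left hgoal hδ

lemma tiny_part (hA0 : A 0 = 0) (hstar : ∀ x, IsLUB (supSet A x) (Astar x))
    (hconv : ∀ u v x y : Fin n → ℝ≥0, u < x → u < y → x < v → y < v → u + v = x + y →
      Astar x + Astar y < Astar u + Astar v)
    {δ : ℝ≥0} (hδ : 0 < δ) (c : Fin n → ℝ≥0) (hc : ∀ l, c l ≤ δ) :
    Astar c ≤ ∑ l, c l * Phi Astar δ l := by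
  have main : ∀ s : Finset (Fin n),
      Astar (∑ l ∈ s, Pi.single l (c l)) ≤ ∑ l ∈ s, c l * Phi Astar δ l := by
    intro s
    induction s using Finset.induction with
    | empty => simp [star_zero hA0 hstar]
    | insert _ _ hx ih =>
      rename_i a s'
      rw [Finset.sum_insert hx, Finset.sum_insert hx]
      set w : Fin n → ℝ≥0 := ∑ l ∈ s', Pi.single l (c l) with hw
      have hwval : ∀ l, w l = if l ∈ s' then c l else 0 := by
        intro l
        rw [hw, Finset.sum_apply]
        simp_rw [Pi.single_apply]
        rw [Finset.sum_ite_eq s' l (fun l => c l)]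
      have hwbeta : w ≤ beta δ a := by
        intro l
        rw [hwval l, beta]
        by_cases h : l = a
        · rw [h]
          simp [hx]
        · simp only [h, if_false]
          by_cases h2 : l ∈ s'
          · simp [h2, hc l]
          · simp [h2]
      have hsuper : Astar (Pi.single a (c a) + w) + Astar (beta δ a)
          ≤ Astar w + Astar (beta δ a + Pi.single a (c a)) := by
        rcases eq_or_ne (c a) 0 with h0 | h0
        · rw [h0, Pi.single_zero, zero_add, add_zero]
        rcases eq_or_lt_of_le hwbeta with heq | hlt
        · rw [heq, add_comm (Pi.single a (c a)) (beta δ a)]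
          exact le_of_eq (add_comm _ _)
        · have hps : (0 : Fin n → ℝ≥0) < Pi.single a (c a) :=
            pos_iff_ne_zero.mpr (single_ne_zero' a h0)
          have h1 : w < Pi.single a (c a) + w := by
            rw [add_comm]
            exact lt_add_of_pos_right w hps
          have h2 : w < beta δ a := hlt
          have h3 : Pi.single a (c a) + w < beta δ a + Pi.single a (c a) := by
            rw [add_comm (beta δ a)]
            exact add_lt_add_right hlt _
          have h4 : beta δ a < beta δ a + Pi.single a (c a) := lt_add_of_pos_right _ hps
          have heq : w + (beta δ a + Pi.single a (c a))
              = (Pi.single a (c a) + w) + beta δ a := by ring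
          have := hconv w (beta δ a + Pi.single a (c a)) (Pi.single a (c a) + w) (beta δ a)
            h1 h2 h3 h4 heq
          exact this.le
      have hincr := increment_le hA0 hstar hconv hδ a (hc a)
      have hcomb : Astar (Pi.single a (c a) + w)
          ≤ Astar w + c a * Phi Astar δ a := by
        have h5 : Astar (Pi.single a (c a) + w) + Astar (beta δ a)
            ≤ (Astar w + c a * Phi Astar δ a) + Astar (beta δ a) := by
          calc Astar (Pi.single a (c a) + w) + Astar (beta δ a)
              ≤ Astar w + Astar (beta δ a + Pi.single a (c a)) := hsuper
            _ ≤ Astar w + (Astar (beta δ a) + c a * Phi Astar δ a) := add_le_add_right hincr _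
            _ = (Astar w + c a * Phi Astar δ a) + Astar (beta δ a) := by ring
        exact le_of_add_le_add_right h5
      calc Astar (Pi.single a (c a) + w) ≤ Astar w + c a * Phi Astar δ a := hcomb
        _ ≤ (∑ l ∈ s', c l * Phi Astar δ l) + c a * Phi Astar δ a := add_le_add_left ih _
        _ = c a * Phi Astar δ a + ∑ l ∈ s', c l * Phi Astar δ l := by ring
  have hcid : c = ∑ l, Pi.single l (c l) := (Finset.univ_sum_single c).symm
  calc Astar c = Astar (∑ l, Pi.single l (c l)) := by rw [← hcid]
    _ ≤ ∑ l, c l * Phi Astar δ l := main Finset.univ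

lemma Phi_le (hA0 : A 0 = 0) (hstar : ∀ x, IsLUB (supSet A x) (Astar x))
    (hconv : ∀ u v x y : Fin n → ℝ≥0, u < x → u < y → x < v → y < v → u + v = x + y →
      Astar x + Astar y < Astar u + Astar v)
    {δ T : ℝ≥0} (hδ : 0 < δ) (hδ1 : δ ≤ 1) (hδT : δ ≤ T) (a : Fin n) :
    Phi Astar δ a ≤ Astar (Pi.single a T) / T + δ * Astar (Pi.single a T + allOne) / T := by
  have hT : 0 < T := lt_of_lt_of_le hδ hδT
  have step1 : Phi Astar δ a ≤ Astar (beta δ a + Pi.single a T) / T := by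
    have h := conv1' hstar hconv (beta δ a) (Pi.single a 1) hδT
    rw [single_smul_one, single_smul_one, beta_add_single] at h
    rw [Phi, div_le_div_iff₀ hδ hT]
    rw [tsub_mul, tsub_le_iff_right]
    calc Astar (δ • allOne) * T = T * Astar (δ • allOne) := mul_comm _ _
      _ ≤ (T - δ) * Astar (beta δ a) + δ * Astar (beta δ a + Pi.single a T) := h
      _ ≤ T * Astar (beta δ a) + δ * Astar (beta δ a + Pi.single a T) :=
          add_le_add_left (mul_le_mul_of_nonneg_right tsub_le_self (zero_le)) _
      _ = Astar (beta δ a + Pi.single a T) * δ + Astar (beta δ a) * T := by ring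
  have step2 : Astar (beta δ a + Pi.single a T)
      ≤ Astar (Pi.single a T) + δ * Astar (Pi.single a T + allOne) := by
    set w : Fin n → ℝ≥0 := fun l => if l = a then 0 else 1 with hwdef
    have hbw : beta δ a = δ • w := by
      funext l
      simp only [beta, hwdef, Pi.smul_apply, smul_eq_mul]
      by_cases h : l = a <;> simp [h]
    have h := conv1' hstar hconv (Pi.single a T) w hδ1
    rw [one_mul, one_smul] at h
    have hwone : w ≤ allOne := by
      intro l
      simp only [hwdef, allOne]
      by_cases h : l = a <;> simp [h]
    calc Astar (beta δ a + Pi.single a T) = Astar (Pi.single a T + δ • w) := by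
          rw [add_comm, hbw]
      _ ≤ (1 - δ) * Astar (Pi.single a T) + δ * Astar (Pi.single a T + w) := h
      _ ≤ Astar (Pi.single a T) + δ * Astar (Pi.single a T + allOne) := by
          apply add_le_add
          · calc (1 - δ) * Astar (Pi.single a T) ≤ 1 * Astar (Pi.single a T) :=
                  mul_le_mul_of_nonneg_right tsub_le_self (zero_le)
              _ = Astar (Pi.single a T) := one_mul _
          · exact mul_le_mul_right (star_mono hstar (add_le_add_right hwone _)) δ
  calc Phi Astar δ a ≤ Astar (beta δ a + Pi.single a T) / T := step1
    _ ≤ (Astar (Pi.single a T) + δ * Astar (Pi.single a T + allOne)) / T := by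
        exact div_le_div_of_nonneg_right step2 hT.le
    _ = Astar (Pi.single a T) / T + δ * Astar (Pi.single a T + allOne) / T := add_div _ _ _

lemma key (hA0 : A 0 = 0) (hmono : Monotone A)
    (hstar : ∀ x, IsLUB (supSet A x) (Astar x))
    (hconv : ∀ u v x y : Fin n → ℝ≥0, u < x → u < y → x < v → y < v → u + v = x + y →
      Astar x + Astar y < Astar u + Astar v)
    (y : Fin n → ℝ≥0) :
    (∑ i, grd Astar i * y i) ≤ A y := by
  classical
  by_contra hcon
  push_neg at hcon
  have hy : y ≠ 0 := by
    intro h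
    rw [h] at hcon
    simp only [Pi.zero_apply, mul_zero, Finset.sum_const_zero] at hcon
    exact absurd hcon (not_lt.mpr (zero_le))
  obtain ⟨i0y, hi0y⟩ : ∃ i, y i ≠ 0 := by
    by_contra hc
    push_neg at hc
    exact hy (funext hc)
  haveI hne : Nonempty (Fin n) := ⟨i0y⟩
  set G := ∑ i, grd Astar i * y i with hG
  set D := Astar y with hD
  have hGD : G < D := linear_lt_star hA0 hstar hconv hy
  have hAyG : A y < G := hcon
  have hD0 : 0 < D := lt_of_le_of_lt ((zero_le (a := G))) hGD
  have hDG0 : (0:ℝ≥0) < D - G := tsub_pos_of_lt hGD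
  -- choose θ
  set Cone := Astar allOne + 1 with hCone
  have hCone0 : Cone ≠ 0 := by
    rw [hCone]
    exact ne_of_gt (lt_of_lt_of_le zero_lt_one le_add_self)
  set θ := min 1 ((D - G) / (2 * Cone)) with hθ
  have hθpos : 0 < θ := by
    apply lt_min zero_lt_one
    rw [pos_iff_ne_zero]
    exact div_ne_zero (ne_of_gt hDG0) (mul_ne_zero two_ne_zero hCone0)
  have hθ1 : θ ≤ 1 := min_le_left _ _
  have hθdg : Astar (θ • allOne) ≤ D - G := by
    have h := conv1' hstar hconv 0 allOne hθ1
    rw [star_zero hA0 hstar, mul_zero, zero_add, zero_add, zero_add, one_mul, one_smul] at h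
    calc Astar (θ • allOne) ≤ θ * Astar allOne := h
      _ ≤ ((D - G)/(2 * Cone)) * Astar allOne :=
          mul_le_mul_of_nonneg_right (min_le_right _ _) (zero_le)
      _ ≤ D - G := by
          rw [div_mul_eq_mul_div, div_le_iff₀ (pos_iff_ne_zero.mpr (mul_ne_zero two_ne_zero hCone0))]
          apply mul_le_mul_right
          calc Astar allOne ≤ Cone := le_self_add
            _ ≤ 2 * Cone := by
                rw [two_mul]
                exact le_add_self
  have hMtopD : A y + Astar (θ • allOne) < D := by
    calc A y + Astar (θ • allOne) < G + (D - G) := add_lt_add_of_lt_of_le hAyG hθdg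
      _ = D := add_tsub_cancel_of_le hGD.le
  -- choose ε
  set Sy := ∑ i, y i with hSy
  set ε := (D - G) / (2 * (Sy + 1)) with hε
  have hSy1 : (Sy + 1 : ℝ≥0) ≠ 0 := by
    exact ne_of_gt (lt_of_lt_of_le zero_lt_one le_add_self)
  have hεpos : 0 < ε := by
    rw [pos_iff_ne_zero]
    exact div_ne_zero (ne_of_gt hDG0) (mul_ne_zero two_ne_zero hSy1)
  have hεG : G + ε * Sy < D := by
    have h1 : ε * Sy ≤ (D - G)/2 := by
      rw [hε, div_mul_eq_mul_div, div_le_div_iff₀ (mul_pos zero_lt_two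
        (lt_of_lt_of_le zero_lt_one le_add_self)) zero_lt_two]
      calc (D - G) * Sy * 2 = (D - G) * (2 * Sy) := by ring
        _ ≤ (D - G) * (2 * (Sy + 1)) := by
            apply mul_le_mul_right
            exact mul_le_mul_right le_self_add 2
    have h2 : (D - G)/2 < D - G := NNReal.half_lt_self (ne_of_gt hDG0)
    calc G + ε * Sy ≤ G + (D - G)/2 := add_le_add_right h1 _
      _ < G + (D - G) := add_lt_add_right h2 _
      _ = D := add_tsub_cancel_of_le hGD.le
  -- choose T
  have hε2 : 0 < ε/2 := by
    rw [pos_iff_ne_zero]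
    exact div_ne_zero (ne_of_gt hεpos) two_ne_zero
  have hTex : ∀ i : Fin n, ∃ T, 0 < T ∧ Astar (Pi.single i T) / T < grd Astar i + ε/2 :=
    fun i => exists_slope_lt i (lt_add_of_pos_right _ hε2)
  choose T hTpos hTs using hTex
  -- choose δ
  set Cf := fun i => Astar (Pi.single i (T i) + allOne) + 1 with hCf
  have hCf0 : ∀ i, Cf i ≠ 0 := fun i =>
    ne_of_gt (lt_of_lt_of_le zero_lt_one le_add_self)
  set δ := min 1 (Finset.univ.inf' Finset.univ_nonempty
    (fun i => min (T i) ((ε/2) * (T i) / (Cf i)))) with hδdef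
  have hδpos : 0 < δ := by
    apply lt_min zero_lt_one
    rw [Finset.lt_inf'_iff]
    intro i _
    apply lt_min (hTpos i)
    rw [pos_iff_ne_zero]
    exact div_ne_zero (mul_ne_zero (ne_of_gt hε2) (ne_of_gt (hTpos i))) (hCf0 i)
  have hδ1 : δ ≤ 1 := min_le_left _ _
  have hδT : ∀ i, δ ≤ T i := fun i =>
    le_trans (min_le_right _ _)
      (le_trans (Finset.inf'_le _ (Finset.mem_univ i)) (min_le_left _ _))
  have hδC : ∀ i, δ ≤ (ε/2) * (T i) / (Cf i) := fun i =>
    le_trans (min_le_right _ _)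
      (le_trans (Finset.inf'_le _ (Finset.mem_univ i)) (min_le_right _ _))
  have hΦ : ∀ i, Phi Astar δ i ≤ grd Astar i + ε := by
    intro i
    have h1 := Phi_le hA0 hstar hconv hδpos hδ1 (hδT i) i
    have h2 : δ * Astar (Pi.single i (T i) + allOne) / T i ≤ ε/2 := by
      have hAs : Astar (Pi.single i (T i) + allOne) ≤ Cf i := le_self_add
      have h4 : δ * Astar (Pi.single i (T i) + allOne) ≤ (ε/2) * T i := by
        calc δ * Astar (Pi.single i (T i) + allOne)
            ≤ ((ε/2) * (T i) / (Cf i)) * Cf i :=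
              mul_le_mul' (hδC i) hAs
          _ = (ε/2) * T i := div_mul_cancel₀ _ (hCf0 i)
      calc δ * Astar (Pi.single i (T i) + allOne) / T i
          ≤ ((ε/2) * T i) / T i := div_le_div_of_nonneg_right h4 (hTpos i).le
        _ = ε/2 := mul_div_cancel_right₀ _ (ne_of_gt (hTpos i))
    calc Phi Astar δ i
        ≤ Astar (Pi.single i (T i)) / (T i) + δ * Astar (Pi.single i (T i) + allOne) / T i := by
          clear_value δ Cf
          exact h1
      _ ≤ (grd Astar i + ε/2) + ε/2 := add_le_add (hTs i).le h2
      _ = grd Astar i + ε := by rw [add_assoc, add_halves]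
  -- the three bounds
  set Mtiny := ∑ l, y l * Phi Astar δ l with hMtinydef
  have hMtinyD : Mtiny < D := by
    calc Mtiny ≤ ∑ l, y l * (grd Astar l + ε) :=
          Finset.sum_le_sum (fun l _ => mul_le_mul_right (hΦ l) _)
      _ = G + ε * Sy := by
          rw [hG, hSy]
          simp only [mul_add]
          rw [Finset.sum_add_distrib]
          congr 1
          · exact Finset.sum_congr rfl (fun l _ => mul_comm _ _)
          · rw [← Finset.sum_mul, mul_comm]
      _ < D := hεG
  set Mtop := A y + Astar (θ • allOne) with hMtopdef
  set lop := fun (p : Fin n × Fin n) => (Pi.single p.1 δ : Fin n → ℝ≥0) with hlop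
  set hip := fun (p : Fin n × Fin n) =>
    (fun l => if l = p.2 then y l - θ else y l : Fin n → ℝ≥0) with hhip
  set Mbig := Finset.univ.sup (fun p : Fin n × Fin n =>
      if lop p ≤ hip p ∧ θ < y p.2 then vsup Astar y (lop p) (hip p) else 0) with hMbigdef
  have hhipy : ∀ p, hip p ≤ y := by
    intro p l
    simp only [hhip]
    by_cases h : l = p.2
    · rw [if_pos h]; exact tsub_le_self
    · rw [if_neg h]
  have hMbigD : Mbig < D := by
    rw [hMbigdef, Finset.sup_lt_iff hD0]
    intro p _
    by_cases hval : lop p ≤ hip p ∧ θ < y p.2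
    · rw [if_pos hval]
      apply vsup_lt hA0 hstar hconv (hhipy p) hval.1 hD0
      · intro S h0
        have h2 : δ ≤ vtx (lop p) (hip p) S p.1 := by
          rw [vtx]
          by_cases h : p.1 ∈ S
          · rw [if_pos h]
            calc δ = lop p p.1 := by simp only [hlop]; rw [Pi.single_eq_same]
              _ ≤ hip p p.1 := hval.1 p.1
          · rw [if_neg h]
            simp only [hlop]
            rw [Pi.single_eq_same]
        rw [h0] at h2
        simp only [Pi.zero_apply, le_zero_iff] at h2
        exact absurd h2 (ne_of_gt hδpos)
      · intro S h0
        have hv2 : vtx (lop p) (hip p) S p.2 ≤ y p.2 - θ := by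
          rw [vtx]
          by_cases h : p.2 ∈ S
          · rw [if_pos h]
            simp only [hhip]
            simp
          · rw [if_neg h]
            calc lop p p.2 ≤ hip p p.2 := hval.1 p.2
              _ = y p.2 - θ := by simp only [hhip]; simp
        have h2 : θ ≤ (y - vtx (lop p) (hip p) S) p.2 := by
          calc θ = y p.2 - (y p.2 - θ) := (tsub_tsub_cancel_of_le hval.2.le).symm
            _ ≤ y p.2 - vtx (lop p) (hip p) S p.2 := tsub_le_tsub_left hv2 _
            _ = (y - vtx (lop p) (hip p) S) p.2 := rfl
        rw [h0] at h2
        simp only [Pi.zero_apply, le_zero_iff] at h2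
        exact absurd h2 (ne_of_gt hθpos)
    · rw [if_neg hval]
      exact hD0
  set M := max Mtiny (max Mtop Mbig) with hM
  have hMD : M < D := max_lt hMtinyD (max_lt hMtopD hMbigD)
  have hub : ∀ s ∈ supSet A y, s ≤ M := by
    rintro s ⟨k, c, hk, hsum, rfl⟩
    have hsuml : ∀ l, (∑ j, c j l) ≤ y l := by
      intro l
      have := hsum l
      rwa [Finset.sum_apply] at this
    by_cases htiny : ∀ j, ∀ l, c j l ≤ δ
    · have h1 : ∀ j, A (c j) ≤ ∑ l, c j l * Phi Astar δ l := fun j =>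
        le_trans (le_star hstar (c j)) (tiny_part hA0 hstar hconv hδpos (c j) (htiny j))
      calc (∑ j, A (c j)) ≤ ∑ j, ∑ l, c j l * Phi Astar δ l :=
            Finset.sum_le_sum (fun j _ => h1 j)
        _ = ∑ l, (∑ j, c j l) * Phi Astar δ l := by
            rw [Finset.sum_comm]
            refine Finset.sum_congr rfl (fun l _ => ?_)
            rw [← Finset.sum_mul]
        _ ≤ ∑ l, y l * Phi Astar δ l :=
            Finset.sum_le_sum (fun l _ =>
              mul_le_mul_of_nonneg_right (hsuml l) (zero_le))
        _ = Mtiny := by rw [hMtinydef]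
        _ ≤ M := le_max_left _ _
    · push_neg at htiny
      obtain ⟨j0, l0, hbig'⟩ := htiny
      have hVle := sum_le_part_add_star hA0 hstar hk hsum j0
      have hcy : c j0 ≤ y :=
        le_trans (Finset.single_le_sum (fun j _ => zero_le (a := c j)) (Finset.mem_univ j0)) hsum
      by_cases htop : ∀ l, y l ≤ c j0 l + θ
      · have hsm : y - c j0 ≤ θ • allOne := by
          intro l
          have : (θ • allOne : Fin n → ℝ≥0) l = θ := by
            simp [allOne]
          rw [Pi.sub_apply, this]
          exact tsub_le_iff_left.mpr (htop l)
        calc (∑ j, A (c j)) ≤ A (c j0) + Astar (y - c j0) := hVle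
          _ ≤ A y + Astar (θ • allOne) := add_le_add (hmono hcy) (star_mono hstar hsm)
          _ = Mtop := by rw [hMtopdef]
          _ ≤ M := le_trans (le_max_left Mtop Mbig) (le_max_right Mtiny _)
      · push_neg at htop
        obtain ⟨l1, hl1⟩ := htop
        set p : Fin n × Fin n := (l0, l1) with hp
        have hθy : θ < y l1 := lt_of_le_of_lt le_add_self hl1
        have hchi1 : c j0 l1 ≤ y l1 - θ := le_tsub_of_add_le_right hl1.le
        have hlc : lop p ≤ c j0 := by
          intro l
          simp only [hlop, hp]
          by_cases h : l = l0
          · rw [h, Pi.single_eq_same]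
            exact hbig'.le
          · rw [Pi.single_eq_of_ne h]
            exact zero_le
        have hch : c j0 ≤ hip p := by
          intro l
          simp only [hhip, hp]
          by_cases h : l = l1
          · rw [if_pos h, h]
            exact hchi1
          · rw [if_neg h]
            exact hcy l
        have hlh : lop p ≤ hip p := le_trans hlc hch
        have hbox := box_bound hstar hconv hlh (hhipy p) Finset.univ (c j0) hlc hch
          (fun l hl => absurd (Finset.mem_univ l) hl)
        calc (∑ j, A (c j)) ≤ A (c j0) + Astar (y - c j0) := hVle
          _ ≤ Astar (c j0) + Astar (y - c j0) := add_le_add_left (le_star hstar _) _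
          _ ≤ vsup Astar y (lop p) (hip p) := hbox
          _ ≤ Mbig := by
              rw [hMbigdef]
              have hle := Finset.le_sup (f := fun p : Fin n × Fin n =>
                if lop p ≤ hip p ∧ θ < y p.2 then vsup Astar y (lop p) (hip p) else 0)
                (Finset.mem_univ p)
              beta_reduce at hle
              rwa [if_pos ⟨hlh, hθy⟩] at hle
          _ ≤ M := le_trans (le_max_right Mtop Mbig) (le_max_right Mtiny _)
  have hDM : D ≤ M := (hstar y).2 hub
  exact absurd (lt_of_le_of_lt hDM hMD) (lt_irrefl D)

lemma q_tendsto (hA0 : A 0 = 0) (hstar : ∀ x, IsLUB (supSet A x) (Astar x))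
    (hconv : ∀ u v x y : Fin n → ℝ≥0, u < x → u < y → x < v → y < v → u + v = x + y →
      Astar x + Astar y < Astar u + Astar v) (i : Fin n) :
    Filter.Tendsto (fun t : ℝ≥0 => Astar (Pi.single i t) / t)
      (nhdsWithin 0 (Set.Ioi 0)) (nhds (grd Astar i)) := by
  rw [tendsto_order]
  constructor
  · intro b hb
    filter_upwards [self_mem_nhdsWithin] with t ht
    exact lt_of_lt_of_le hb (grd_le i ht)
  · intro b hb
    obtain ⟨Tb, hTb, hqb⟩ := exists_slope_lt i hb
    filter_upwards [Ioo_mem_nhdsGT_of_mem ⟨le_refl 0, hTb⟩] with t ht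
    exact lt_of_le_of_lt (slope_mono hA0 hstar hconv i ht.1 ht.2.le) hqb

lemma grd_le_A_single (hA0 : A 0 = 0) (hmono : Monotone A)
    (hstar : ∀ x, IsLUB (supSet A x) (Astar x))
    (hconv : ∀ u v x y : Fin n → ℝ≥0, u < x → u < y → x < v → y < v → u + v = x + y →
      Astar x + Astar y < Astar u + Astar v) (i : Fin n) (t : ℝ≥0) :
    grd Astar i * t ≤ A (Pi.single i t) := by
  have hk := key hA0 hmono hstar hconv (Pi.single i t)
  have hsum : (∑ j, grd Astar j * (Pi.single i t : Fin n → ℝ≥0) j) = grd Astar i * t := by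
    rw [Finset.sum_eq_single i]
    · rw [Pi.single_eq_same]
    · intro j _ hj
      rw [Pi.single_eq_of_ne hj, mul_zero]
    · intro h
      exact absurd (Finset.mem_univ i) h
  rwa [hsum] at hk

lemma a_tendsto (hA0 : A 0 = 0) (hmono : Monotone A)
    (hstar : ∀ x, IsLUB (supSet A x) (Astar x))
    (hconv : ∀ u v x y : Fin n → ℝ≥0, u < x → u < y → x < v → y < v → u + v = x + y →
      Astar x + Astar y < Astar u + Astar v) (i : Fin n) :
    Filter.Tendsto (fun t : ℝ≥0 => A (Pi.single i t) / t)
      (nhdsWithin 0 (Set.Ioi 0)) (nhds (grd Astar i)) := by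
  apply tendsto_of_tendsto_of_tendsto_of_le_of_le' tendsto_const_nhds
    (q_tendsto hA0 hstar hconv i)
  · filter_upwards [self_mem_nhdsWithin] with t ht
    rw [le_div_iff₀ ht]
    exact grd_le_A_single hA0 hmono hstar hconv i t
  · filter_upwards [self_mem_nhdsWithin] with t ht
    exact div_le_div_of_nonneg_right (le_star hstar _) (zero_le)

def subSet (A : (Fin n → ℝ≥0) → ℝ≥0) (x : Fin n → ℝ≥0) : Set ℝ≥0 :=
  {s : ℝ≥0 | ∃ (k : ℕ) (d : Fin k → (Fin n → ℝ≥0)), 1 ≤ k ∧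
    x ≤ (∑ i, d i) ∧ s = ∑ i, A (d i)}

lemma glb_lower (hA0 : A 0 = 0) (hmono : Monotone A)
    (hstar : ∀ x, IsLUB (supSet A x) (Astar x))
    (hconv : ∀ u v x y : Fin n → ℝ≥0, u < x → u < y → x < v → y < v → u + v = x + y →
      Astar x + Astar y < Astar u + Astar v) (x : Fin n → ℝ≥0) :
    ∀ s ∈ subSet A x, (∑ i, grd Astar i * x i) ≤ s := by
  rintro s ⟨k, d, hk, hsum, rfl⟩
  calc (∑ i, grd Astar i * x i) ≤ ∑ i, grd Astar i * (∑ j, d j) i :=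
        Finset.sum_le_sum (fun i _ => mul_le_mul_right (hsum i) _)
    _ = ∑ i, ∑ j, grd Astar i * d j i := by
        refine Finset.sum_congr rfl fun i _ => ?_
        rw [Finset.sum_apply, Finset.mul_sum]
    _ = ∑ j, ∑ i, grd Astar i * d j i := Finset.sum_comm
    _ ≤ ∑ j, A (d j) := Finset.sum_le_sum (fun j _ => by
        have hkj := key hA0 hmono hstar hconv (d j)
        exact hkj)

lemma glb_greatest (hA0 : A 0 = 0) (hmono : Monotone A)
    (hstar : ∀ x, IsLUB (supSet A x) (Astar x))
    (hconv : ∀ u v x y : Fin n → ℝ≥0, u < x → u < y → x < v → y < v → u + v = x + y →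
      Astar x + Astar y < Astar u + Astar v) (x : Fin n → ℝ≥0) (b : ℝ≥0)
    (hb : ∀ s ∈ subSet A x, b ≤ s) :
    b ≤ ∑ i, grd Astar i * x i := by
  classical
  have hblow : ∀ ε : ℝ≥0, 0 < ε → b ≤ (∑ i, grd Astar i * x i) + ε * (∑ i, x i) := by
    intro ε hε
    have hTex : ∀ i : Fin n, ∃ T, 0 < T ∧ Astar (Pi.single i T) / T < grd Astar i + ε :=
      fun i => exists_slope_lt i (lt_add_of_pos_right _ hε)
    choose T hTpos hTs using hTex
    obtain ⟨N, hN1, hN⟩ : ∃ N : ℕ, 1 ≤ N ∧ ∀ i, x i ≤ (N : ℝ≥0) * T i := by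
      refine ⟨1 + Finset.univ.sup (fun i => ⌈(x i / T i)⌉₊), by omega, ?_⟩
      intro i
      have h1 : (x i / T i) ≤ (⌈(x i / T i)⌉₊ : ℝ≥0) := Nat.le_ceil _
      have h2 : ((⌈(x i / T i)⌉₊ : ℕ) : ℝ≥0)
          ≤ ((1 + Finset.univ.sup (fun i => ⌈(x i / T i)⌉₊) : ℕ) : ℝ≥0) := by
        apply Nat.cast_le.mpr
        have h4 := Finset.le_sup (f := fun i => ⌈(x i / T i)⌉₊) (Finset.mem_univ i)
        beta_reduce at h4
        omega
      calc x i = (x i / T i) * T i := (div_mul_cancel₀ _ (ne_of_gt (hTpos i))).symm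
        _ ≤ ((1 + Finset.univ.sup (fun i => ⌈(x i / T i)⌉₊) : ℕ) : ℝ≥0) * T i :=
            mul_le_mul_of_nonneg_right (le_trans h1 h2) (zero_le)
    have hNne : ((N:ℕ) : ℝ≥0) ≠ 0 := by
      simp only [ne_eq, Nat.cast_eq_zero]
      omega
    set part : Fin n × Fin N → (Fin n → ℝ≥0) := fun q => Pi.single q.1 (x q.1 / N) with hpart
    set d : Fin (n*N + 1) → (Fin n → ℝ≥0) :=
      Fin.cases 0 (fun j => part (finProdFinEquiv.symm j)) with hd
    have hNsingle : ∀ i : Fin n,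
        (N • (Pi.single i (x i / N) : Fin n → ℝ≥0)) = Pi.single i (x i) := by
      intro i
      funext l
      simp only [Pi.smul_apply, smul_eq_mul, Pi.single_apply, nsmul_eq_mul]
      by_cases h : l = i
      · rw [if_pos h, if_pos h, mul_comm, div_mul_cancel₀ _ hNne]
      · rw [if_neg h, if_neg h, mul_zero]
    have hdsum : (∑ j, d j) = x := by
      rw [Fin.sum_univ_succ]
      simp only [hd, Fin.cases_zero, Fin.cases_succ, zero_add]
      rw [Equiv.sum_comp finProdFinEquiv.symm part]
      rw [Fintype.sum_prod_type]
      simp only [hpart]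
      calc (∑ i : Fin n, ∑ _m : Fin N, (Pi.single i (x i / N) : Fin n → ℝ≥0))
          = ∑ i : Fin n, N • (Pi.single i (x i / N) : Fin n → ℝ≥0) := by
            refine Finset.sum_congr rfl fun i _ => ?_
            rw [Finset.sum_const, Finset.card_univ, Fintype.card_fin]
        _ = ∑ i : Fin n, (Pi.single i (x i) : Fin n → ℝ≥0) := by
            refine Finset.sum_congr rfl fun i _ => ?_
            rw [hNsingle]
        _ = x := Finset.univ_sum_single x
    have hmem : (∑ j, A (d j)) ∈ subSet A x :=
      ⟨n*N + 1, d, by omega, le_of_eq hdsum.symm, rfl⟩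
    have hval : (∑ j, A (d j)) = ∑ i : Fin n, (N : ℝ≥0) * A (Pi.single i (x i / N)) := by
      rw [Fin.sum_univ_succ]
      simp only [hd, Fin.cases_zero, Fin.cases_succ, hA0, zero_add]
      rw [Equiv.sum_comp finProdFinEquiv.symm (fun q => A (part q))]
      rw [Fintype.sum_prod_type]
      refine Finset.sum_congr rfl fun i _ => ?_
      simp only [hpart]
      rw [Finset.sum_const, Finset.card_univ, Fintype.card_fin, nsmul_eq_mul]
    have hperi : ∀ i : Fin n,
        (N : ℝ≥0) * A (Pi.single i (x i / N)) ≤ (grd Astar i + ε) * x i := by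
      intro i
      rcases eq_or_ne (x i) 0 with h0 | h0
      · rw [h0, zero_div, Pi.single_zero, hA0, mul_zero, mul_zero]
      · set t := x i / N with ht
        have htpos : 0 < t := by
          rw [pos_iff_ne_zero, ht]
          exact div_ne_zero h0 hNne
        have htT : t ≤ T i := by
          rw [ht, div_le_iff₀ (pos_iff_ne_zero.mpr hNne)]
          calc x i ≤ (N:ℝ≥0) * T i := hN i
            _ = T i * (N:ℝ≥0) := mul_comm _ _
        have hA1 : A (Pi.single i t) ≤ t * (grd Astar i + ε) := by
          calc A (Pi.single i t) ≤ Astar (Pi.single i t) := le_star hstar _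
            _ = t * (Astar (Pi.single i t) / t) := by
                rw [mul_comm, div_mul_cancel₀ _ (ne_of_gt htpos)]
            _ ≤ t * (Astar (Pi.single i (T i)) / T i) :=
                mul_le_mul_right (slope_mono hA0 hstar hconv i htpos htT) t
            _ ≤ t * (grd Astar i + ε) := mul_le_mul_right (hTs i).le t
        calc (N : ℝ≥0) * A (Pi.single i t) ≤ (N:ℝ≥0) * (t * (grd Astar i + ε)) :=
              mul_le_mul_right hA1 _
          _ = ((N:ℝ≥0) * t) * (grd Astar i + ε) := by ring
          _ = x i * (grd Astar i + ε) := by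
              rw [ht, mul_comm (N:ℝ≥0) _, div_mul_cancel₀ _ hNne]
          _ = (grd Astar i + ε) * x i := mul_comm _ _
    calc b ≤ ∑ j, A (d j) := hb _ hmem
      _ = ∑ i : Fin n, (N : ℝ≥0) * A (Pi.single i (x i / N)) := hval
      _ ≤ ∑ i, (grd Astar i + ε) * x i := Finset.sum_le_sum (fun i _ => hperi i)
      _ = (∑ i, grd Astar i * x i) + ε * (∑ i, x i) := by
          simp only [add_mul]
          rw [Finset.sum_add_distrib]
          congr 1
          rw [Finset.mul_sum]
  -- conclude
  rw [← NNReal.coe_le_coe]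
  apply le_of_forall_pos_le_add
  intro ε' hε'
  set Sx := ∑ i, x i with hSx
  have hSx1 : (Sx + 1 : ℝ≥0) ≠ 0 := ne_of_gt (lt_of_lt_of_le zero_lt_one le_add_self)
  set εn : ℝ≥0 := ε'.toNNReal / (Sx + 1) with hεn
  have hεnpos : 0 < εn := by
    rw [pos_iff_ne_zero, hεn]
    exact div_ne_zero (ne_of_gt (Real.toNNReal_pos.mpr hε')) hSx1
  have h1 := hblow εn hεnpos
  have h2 : εn * Sx ≤ ε'.toNNReal := by
    rw [hεn, div_mul_eq_mul_div, div_le_iff₀ (pos_iff_ne_zero.mpr hSx1)]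
    exact mul_le_mul_right le_self_add _
  calc (b:ℝ) ≤ (((∑ i, grd Astar i * x i) + εn * Sx : ℝ≥0) : ℝ) := NNReal.coe_le_coe.mpr h1
    _ ≤ ((∑ i, grd Astar i * x i : ℝ≥0) : ℝ) + ε' := by
        push_cast
        have h3 : ((εn * Sx : ℝ≥0) : ℝ) ≤ ε' := by
          calc ((εn * Sx : ℝ≥0) : ℝ) ≤ (ε'.toNNReal : ℝ) := NNReal.coe_le_coe.mpr h2
            _ = ε' := Real.coe_toNNReal _ hε'.le
        push_cast at h3
        linarith

end Main
end Sub18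

/-- If `A : [0,∞)^n → [0,∞)` is an aggregation function whose super-additive
transformation `A*` is finite and strictly directionally convex, then
`A_*(x) = ∇·x` where `∇ᵢ = lim_{t→0⁺} A(t·eᵢ)/t`. -/
theorem subTransform_linear_of_strictDirectionallyConvex
    (n : ℕ) (A Astar : (Fin n → ℝ≥0) → ℝ≥0)
    (hA0 : A 0 = 0) (hmono : Monotone A)
    (hstar : ∀ x : Fin n → ℝ≥0,
      IsLUB {s : ℝ≥0 | ∃ (k : ℕ) (c : Fin k → (Fin n → ℝ≥0)), 1 ≤ k ∧
        (∑ j, c j) ≤ x ∧ s = ∑ j, A (c j)} (Astar x))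
    (hconv : ∀ u v x y : Fin n → ℝ≥0, u < x → u < y → x < v → y < v → u + v = x + y →
      Astar x + Astar y < Astar u + Astar v) :
    ∃ grad : Fin n → ℝ≥0,
      (∀ i : Fin n, Filter.Tendsto (fun t : ℝ≥0 => A (Pi.single i t) / t)
        (nhdsWithin 0 (Set.Ioi 0)) (nhds (grad i))) ∧
      ∀ x : Fin n → ℝ≥0,
        IsGLB {s : ℝ≥0 | ∃ (k : ℕ) (d : Fin k → (Fin n → ℝ≥0)), 1 ≤ k ∧
          x ≤ (∑ i, d i) ∧ s = ∑ i, A (d i)} (∑ i, grad i * x i) := by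
  have hstar' : ∀ x, IsLUB (Sub18.supSet A x) (Astar x) := hstar
  refine ⟨Sub18.grd Astar, fun i => Sub18.a_tendsto hA0 hmono hstar' hconv i, fun x => ?_⟩
  constructor
  · exact Sub18.glb_lower hA0 hmono hstar' hconv x
  · intro b hb
    exact Sub18.glb_greatest hA0 hmono hstar' hconv x b hb
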